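/- Assume in addition that p_n → 0 and that ℓ_n converges to a limit ℓ. Then ℓ = 1 if and only if the distribution (q_n) of the index Y of the fastest idle server is heavy-tailed, i.e., if and only if Σ_{n=1}^∞ q_n e^{ηn} = ∞ for every η > 0. -/

import Mathlib

open Filter

/-- The recursively defined overflow Laplace–Stieltjes transforms:
`ovLST L0 ms 0 = L0` and
`ovLST L0 ms n s = L_{n-1}(μ_n + s) / (1 - L_{n-1}(s) + L_{n-1}(μ_n + s))`. -/
noncomputable def ovLST (L0 : ℝ → ℝ) (ms : ℕ → ℝ) : ℕ → ℝ → ℝ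
  | 0 => L0
  | n + 1 => fun s =>
      ovLST L0 ms n (ms (n + 1) + s) /
        (1 - ovLST L0 ms n s + ovLST L0 ms n (ms (n + 1) + s))

/-- The blocking probability of the first `n` servers: `p_n = ∏_{i=1}^n L_{i-1}(μ_i)`. -/
noncomputable def blockP (L0 : ℝ → ℝ) (ms : ℕ → ℝ) (n : ℕ) : ℝ :=
  ∏ i ∈ Finset.Icc 1 n, ovLST L0 ms (i - 1) (ms i)

theorem stmt_9
    (μ : ℝ) (hμ : 0 < μ) (ms : ℕ → ℝ)
    (hms : ∀ n, 1 ≤ n → 0 < ms n)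
    (hsum : HasSum (fun n => ms (n + 1)) μ)
    (L0 : ℝ → ℝ) (hL00 : L0 0 = 1)
    (hL0pos : ∀ s, 0 ≤ s → 0 < L0 s)
    (hL0anti : StrictAntiOn L0 (Set.Ici 0))
    (hL0lim : Tendsto L0 atTop (nhds 0))
    (l : ℝ)
    (hp0 : Tendsto (blockP L0 ms) atTop (nhds 0))
    (hl : Tendsto (fun n => ovLST L0 ms n (ms (n + 1))) atTop (nhds l)) :
    l = 1 ↔
      ∀ η : ℝ, 0 < η →
        ¬ Summable (fun n : ℕ =>
          (blockP L0 ms n - blockP L0 ms (n + 1)) * Real.exp (η * (n + 1))) := by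
  -- Basic properties of the recursively defined LSTs
  have key : ∀ n : ℕ, ovLST L0 ms n 0 = 1 ∧
      ∀ s : ℝ, 0 < s → 0 < ovLST L0 ms n s ∧ ovLST L0 ms n s < 1 := by
    intro n
    induction n with
    | zero =>
      refine ⟨hL00, fun s hs => ⟨hL0pos s hs.le, ?_⟩⟩
      have h := hL0anti Set.self_mem_Ici (Set.mem_Ici.mpr hs.le) hs
      rwa [hL00] at h
    | succ n ih =>
      obtain ⟨ih0, ihs⟩ := ih
      have hm : 0 < ms (n + 1) := hms (n + 1) (Nat.le_add_left 1 n)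
      constructor
      · simp only [ovLST, add_zero, ih0]
        have hA := (ihs (ms (n + 1)) hm).1
        field_simp
        ring
      · intro s hs
        have hA := ihs (ms (n + 1) + s) (by linarith)
        have hB := ihs s hs
        have hden : 0 < 1 - ovLST L0 ms n s + ovLST L0 ms n (ms (n + 1) + s) := by
          linarith [hA.1, hB.2]
        simp only [ovLST]
        exact ⟨div_pos hA.1 hden, by rw [div_lt_one hden]; linarith [hB.2]⟩
  set p : ℕ → ℝ := blockP L0 ms with hpdef
  set e : ℕ → ℝ := fun n => ovLST L0 ms n (ms (n + 1)) with hedef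
  have he : ∀ n, 0 < e n ∧ e n < 1 :=
    fun n => (key n).2 (ms (n + 1)) (hms (n + 1) (Nat.le_add_left 1 n))
  have hp_succ : ∀ n, p (n + 1) = p n * e n := by
    intro n
    show blockP L0 ms (n + 1) = blockP L0 ms n * e n
    rw [blockP, blockP, Finset.prod_Icc_succ_top (Nat.le_add_left 1 n)]
    simp [hedef]
  have hp_pos : ∀ n, 0 < p n := by
    intro n
    induction n with
    | zero => show (0:ℝ) < blockP L0 ms 0; simp [blockP]
    | succ n ih => rw [hp_succ]; exact mul_pos ih (he n).1
  have hq_nonneg : ∀ n, 0 ≤ p n - p (n + 1) := by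
    intro n
    rw [hp_succ]
    nlinarith [(he n).2, hp_pos n]
  constructor
  · -- l = 1 → heavy tailed
    intro hl1 η hη hS
    set f : ℕ → ℝ := fun n : ℕ =>
      (blockP L0 ms n - blockP L0 ms (n + 1)) * Real.exp (η * (n + 1)) with hfdef
    have hf_nonneg : ∀ n, 0 ≤ f n := fun n =>
      mul_nonneg (hq_nonneg n) (Real.exp_nonneg _)
    -- the tail sums of f tend to 0
    have hT : Tendsto (fun i => ∑' k, f (k + i)) atTop (nhds 0) := tendsto_sum_nat_add f
    -- tail sum dominates p n * exp(η n)
    have htail : ∀ n : ℕ, p n * Real.exp (η * n) ≤ ∑' k, f (k + n) := by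
      intro n
      have hg : HasSum (fun k => (p (k + n) - p (k + n + 1)) * Real.exp (η * n)) 
          (p n * Real.exp (η * n)) := by
        have h1 : HasSum (fun k => p (k + n) - p (k + n + 1)) (p n) := by
          rw [hasSum_iff_tendsto_nat_of_nonneg (fun k => hq_nonneg (k + n))]
          have : ∀ m : ℕ, ∑ k ∈ Finset.range m, (p (k + n) - p (k + n + 1))
              = p n - p (m + n) := by
            intro m
            have := Finset.sum_range_sub' (fun k => p (k + n)) m
            simpa [Nat.add_right_comm] using this
          simp only [this]
          have : Tendsto (fun m : ℕ => p (m + n)) atTop (nhds 0) :=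
            (hp0.comp (tendsto_add_atTop_nat n))
          simpa using tendsto_const_nhds.sub this
        exact h1.mul_right _
      have hsf : Summable fun k => f (k + n) := (summable_nat_add_iff n).mpr hS
      rw [← hg.tsum_eq]
      refine Summable.tsum_le_tsum (fun k => ?_) hg.summable hsf
      have hle : Real.exp (η * n) ≤ Real.exp (η * ((k + n : ℕ) + 1)) := by
        apply Real.exp_le_exp.mpr
        have : (n : ℝ) ≤ (k + n : ℕ) + 1 := by push_cast; linarith [Nat.cast_nonneg (α := ℝ) k]
        nlinarith
      exact mul_le_mul_of_nonneg_left hle (hq_nonneg (k + n))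
    -- p n * exp (η n) is eventually at least p N > 0
    have hone : (Real.exp (-(η/2)) : ℝ) < 1 := by
      rw [Real.exp_lt_one_iff]; linarith
    have heve : ∀ᶠ n in atTop, Real.exp (-(η/2)) ≤ e n := by
      rw [hl1] at hl
      exact hl.eventually (eventually_ge_nhds hone)
    obtain ⟨N, hN⟩ := eventually_atTop.mp heve
    have hlow : ∀ k : ℕ, p N * Real.exp (-(η/2)) ^ k ≤ p (N + k) := by
      intro k
      induction k with
      | zero => simp
      | succ k ih =>
        have : N + (k + 1) = (N + k) + 1 := by ring
        rw [this, hp_succ, pow_succ, ← mul_assoc]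
        exact mul_le_mul ih (hN (N + k) (Nat.le_add_right N k))
          (Real.exp_nonneg _) (hp_pos (N + k)).le
    have hbig : ∀ k : ℕ, p N ≤ p (N + k) * Real.exp (η * (N + k)) := by
      intro k
      have h1 := hlow k
      have h2 : p N * Real.exp (-(η/2)) ^ k * Real.exp (η * (N + k))
          ≤ p (N + k) * Real.exp (η * (N + k)) :=
        mul_le_mul_of_nonneg_right h1 (Real.exp_nonneg _)
      refine le_trans ?_ h2
      rw [← Real.exp_nat_mul, mul_assoc, ← Real.exp_add]
      have h0 : (0:ℝ) ≤ (k:ℝ) * (-(η/2)) + η * ((N:ℝ) + (k:ℝ)) := by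
        have hk : (0:ℝ) ≤ (k:ℝ) := Nat.cast_nonneg k
        have hN' : (0:ℝ) ≤ (N:ℝ) := Nat.cast_nonneg N
        nlinarith
      have h3 : (1:ℝ) ≤ Real.exp ((k:ℝ) * (-(η/2)) + η * ((N:ℝ) + (k:ℝ))) := by
        rw [← Real.exp_zero]
        exact Real.exp_le_exp.mpr h0
      nlinarith [hp_pos N, h3]
    -- contradiction: tail sums tend to 0 but stay ≥ p N
    have hlim : ∀ᶠ i in atTop, (∑' k, f (k + i)) < p N :=
      hT.eventually (eventually_lt_nhds (hp_pos N))
    obtain ⟨M, hM⟩ := eventually_atTop.mp hlim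
    have h1 := htail (N + max M 0)
    have h2 := hbig (max M 0)
    have h3 := hM (N + max M 0) (le_trans (le_max_left M 0) (Nat.le_add_left _ N))
    push_cast at h1 h2 ⊢
    linarith
  · -- heavy tailed → l = 1
    intro hH
    by_contra hl1
    have hle1 : l ≤ 1 := le_of_tendsto' hl (fun n => ((key n).2 _ (hms (n+1) (Nat.le_add_left 1 n))).2.le)
    have hge0 : 0 ≤ l := ge_of_tendsto' hl (fun n => ((key n).2 _ (hms (n+1) (Nat.le_add_left 1 n))).1.le)
    have hlt1 : l < 1 := lt_of_le_of_ne hle1 hl1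
    set c : ℝ := (1 + l) / 2 with hcdef
    have hc0 : 0 < c := by rw [hcdef]; linarith
    have hc1 : c < 1 := by rw [hcdef]; linarith
    have hlc : l < c := by rw [hcdef]; linarith
    set η : ℝ := -(Real.log c) / 2 with hηdef
    have hη : 0 < η := by
      have := Real.log_neg hc0 hc1
      rw [hηdef]; linarith
    have hr : c * Real.exp η = Real.exp (Real.log c / 2) := by
      rw [hηdef]
      nth_rewrite 1 [← Real.exp_log hc0]
      rw [← Real.exp_add]
      ring_nf
    have hr1 : c * Real.exp η < 1 := by
      rw [hr, Real.exp_lt_one_iff]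
      have := Real.log_neg hc0 hc1
      linarith
    have hr0 : 0 ≤ c * Real.exp η := le_of_lt (mul_pos hc0 (Real.exp_pos _))
    -- eventually e n ≤ c
    obtain ⟨N, hN⟩ := eventually_atTop.mp (hl.eventually (eventually_le_nhds hlc))
    have hup : ∀ k : ℕ, p (N + k) ≤ p N * c ^ k := by
      intro k
      induction k with
      | zero => simp
      | succ k ih =>
        have : N + (k + 1) = (N + k) + 1 := by ring
        rw [this, hp_succ, pow_succ, ← mul_assoc]
        exact mul_le_mul ih (hN (N + k) (Nat.le_add_right N k)) (he (N + k)).1.le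
          (mul_nonneg (hp_pos N).le (pow_nonneg hc0.le k))
    refine hH η hη ?_
    rw [← summable_nat_add_iff N]
    refine Summable.of_nonneg_of_le
      (fun k => mul_nonneg (hq_nonneg (k + N)) (Real.exp_nonneg _))
      (fun k => ?_)
      ((summable_geometric_of_lt_one hr0 hr1).mul_left (p N * Real.exp (η * (N + 1))))
    have hq : blockP L0 ms (k + N) - blockP L0 ms (k + N + 1) ≤ p (N + k) := by
      have := (hp_pos (k + N + 1)).le
      have h' : p (N + k) = blockP L0 ms (k + N) := by rw [Nat.add_comm N k]
      rw [h']
      linarith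
    have h1 : blockP L0 ms (k + N) - blockP L0 ms (k + N + 1) ≤ p N * c ^ k :=
      le_trans hq (hup k)
    have h2 : (blockP L0 ms (k + N) - blockP L0 ms (k + N + 1)) *
        Real.exp (η * ((k + N : ℕ) + 1)) ≤ (p N * c ^ k) * Real.exp (η * ((k + N : ℕ) + 1)) :=
      mul_le_mul_of_nonneg_right h1 (Real.exp_nonneg _)
    refine le_trans h2 (le_of_eq ?_)
    have hxp : Real.exp (η * ((k + N : ℕ) + 1)) = Real.exp (η * ((N:ℝ) + 1)) * Real.exp η ^ k := by
      rw [← Real.exp_nat_mul, ← Real.exp_add]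
      congr 1
      push_cast
      ring
    rw [hxp, mul_pow]
    ring
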